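/- Let G be a finite simple graph with n vertices and m ≥ n edges. There exists a graph H with at most 2n vertices, exactly m edges, and maximum degree at most ⌈2m/n⌉, together with a map φ from V(H) onto V(G) inducing a bijection between E(H) and E(G), obtained by splitting each vertex v of G into ⌈deg(v)/⌈2m/n⌉⌉ copies each receiving at most ⌈2m/n⌉ of v's incident edges. -/

import Mathlib

/-- Let `G` be a finite simple graph with `n` vertices and `m ≥ n` edges.  There exists a
(multi)graph `H` — given by a vertex set `W` and, for each edge of `G`, a lifted unordered
pair of vertices of `W` — with at most `2n` vertices, exactly `m` edges, and maximum degree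
at most `⌈2m/n⌉`, together with a map `φ` from the vertices of `H` onto the vertices of `G`
inducing a bijection between the edges of `H` and the edges of `G`. -/
theorem graph_reduce_exists {V : Type*} [Fintype V] [DecidableEq V]
    (G : SimpleGraph V) [DecidableRel G.Adj] (n m : ℕ)
    (hn : Fintype.card V = n) (hm : G.edgeFinset.card = m) (hmn : n ≤ m) :
    ∃ (W : Type) (_ : Fintype W) (φ : W → V) (ψ : Sym2 V → Sym2 W),
      -- at most 2n vertices
      Nat.card W ≤ 2 * n ∧
      -- φ maps V(H) onto V(G)
      Function.Surjective φ ∧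
      -- each edge of G lifts to an edge of H lying over it (so ψ is injective on edges,
      -- and edge e of H projects to edge φ(e) of G: a bijection between E(H) and E(G))
      (∀ e ∈ G.edgeSet, Sym2.map φ (ψ e) = e) ∧
      -- H has exactly m edges
      (ψ '' G.edgeSet).ncard = m ∧
      -- maximum degree of H is at most ⌈2m/n⌉
      (∀ w : W, {e ∈ G.edgeSet | w ∈ ψ e}.ncard ≤ (2 * m + n - 1) / n) := by
  classical
  rcases Nat.eq_zero_or_pos n with hn0 | hn0
  · -- degenerate case: no vertices
    subst hn0
    haveI : IsEmpty V := Fintype.card_eq_zero_iff.mp hn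
    have hm0 : m = 0 := by
      rw [← hm, Finset.card_eq_zero]
      exact Finset.eq_empty_of_isEmpty _
    refine ⟨Empty, inferInstance, fun w => w.elim, fun e => isEmptyElim e, by simp, ?_, ?_, ?_, ?_⟩
    · intro v; exact isEmptyElim v
    · intro e _; exact isEmptyElim e
    · have : G.edgeSet = ∅ := Set.eq_empty_of_isEmpty _
      simp [this, hm0]
    · intro w; exact isEmptyElim w
  · -- main case
    set Δ : ℕ := (2 * m + n - 1) / n with hΔdef
    have hm1 : 1 ≤ m := le_trans hn0 hmn
    have hΔpos : 0 < Δ := by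
      rw [hΔdef]
      exact (Nat.one_le_div_iff hn0).mpr (by omega)
    -- key inequality : 2 * m ≤ n * Δ
    have hnΔ : 2 * m ≤ n * Δ := by
      have h1 : n * Δ + (2 * m + n - 1) % n = 2 * m + n - 1 := by
        rw [hΔdef]; exact Nat.div_add_mod _ _
      have h2 := Nat.mod_lt (2 * m + n - 1) hn0
      omega
    -- enumeration of incident edges
    let idx : ∀ v : V, {e // e ∈ G.incidenceFinset v} ≃ Fin (G.degree v) :=
      fun v => Finset.equivFinOfCardEq (G.card_incidenceFinset_eq_degree v)
    let r : V → Sym2 V → ℕ := fun v e =>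
      if h : e ∈ G.incidenceFinset v then (idx v ⟨e, h⟩ : Fin (G.degree v)).val else 0
    have hr_lt : ∀ v e (h : e ∈ G.incidenceFinset v), r v e < G.degree v := by
      intro v e h
      simp only [r, dif_pos h]
      exact (idx v ⟨e, h⟩).isLt
    have hr_inj : ∀ v, ∀ e₁ ∈ G.incidenceFinset v, ∀ e₂ ∈ G.incidenceFinset v,
        r v e₁ = r v e₂ → e₁ = e₂ := by
      intro v e₁ h₁ e₂ h₂ hr
      simp only [r, dif_pos h₁, dif_pos h₂] at hr
      have := (idx v).injective (Fin.val_injective hr)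
      exact Subtype.ext_iff.mp this
    let k : V → ℕ := fun v => max 1 ((G.degree v + Δ - 1) / Δ)
    have hk_pos : ∀ v, 0 < k v := fun v => Nat.lt_of_lt_of_le Nat.one_pos (le_max_left _ _)
    let g : V → Sym2 V → ℕ := fun v e => r v e / Δ
    have hg_lt : ∀ v e, g v e < k v := by
      intro v e
      by_cases h : e ∈ G.incidenceFinset v
      · have hd := hr_lt v e h
        have hd1 : 1 ≤ G.degree v := by omega
        have : r v e / Δ ≤ (G.degree v - 1) / Δ := Nat.div_le_div_right (by omega)
        have h2 : (G.degree v - 1) / Δ + 1 = (G.degree v + Δ - 1) / Δ := by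
          rw [show G.degree v + Δ - 1 = (G.degree v - 1) + Δ by omega,
            Nat.add_div_right _ hΔpos]
        calc g v e ≤ (G.degree v - 1) / Δ := this
          _ < (G.degree v + Δ - 1) / Δ := by omega
          _ ≤ k v := le_max_right _ _
      · simp only [g, r, dif_neg h]
        simpa using hk_pos v
    let W₀ := Σ v : V, Fin (k v)
    let W : Type := Fin (Fintype.card W₀)
    let ε : W ≃ W₀ := (Fintype.equivFin W₀).symm
    let f : Sym2 V → V → W₀ := fun e x => ⟨x, ⟨g x e, hg_lt x e⟩⟩
    let φ : W → V := fun w => (ε w).fst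
    let ψ : Sym2 V → Sym2 W := fun e => Sym2.map (fun x => ε.symm (f e x)) e
    have hlift : ∀ e ∈ G.edgeSet, Sym2.map φ (ψ e) = e := by
      intro e _
      simp only [ψ, Sym2.map_map]
      have : (φ ∘ fun x => ε.symm (f e x)) = id := by
        funext x
        simp [φ, f, Equiv.apply_symm_apply]
      rw [this, Sym2.map_id, id_eq]
    refine ⟨W, inferInstance, φ, ψ, ?_, ?_, hlift, ?_, ?_⟩
    · -- card bound
      have hcard : Nat.card W = ∑ v : V, k v := by
        rw [Nat.card_eq_fintype_card]
        simp only [W, Fintype.card_fin, W₀, Fintype.card_sigma, Fintype.card_fin]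
      rw [hcard]
      have hk_le : ∀ v, k v ≤ G.degree v / Δ + 1 := by
        intro v
        refine max_le (Nat.le_add_left 1 _) ?_
        calc (G.degree v + Δ - 1) / Δ ≤ (G.degree v + Δ) / Δ :=
              Nat.div_le_div_right (by omega)
          _ = G.degree v / Δ + 1 := Nat.add_div_right _ hΔpos
      calc ∑ v : V, k v ≤ ∑ v : V, (G.degree v / Δ + 1) := Finset.sum_le_sum fun v _ => hk_le v
        _ = (∑ v : V, G.degree v / Δ) + n := by
            rw [Finset.sum_add_distrib]
            simp [hn, Finset.card_univ]
        _ ≤ (∑ v : V, G.degree v) / Δ + n := by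
            have : ∑ v : V, G.degree v / Δ ≤ (∑ v : V, G.degree v) / Δ := by
              rw [Nat.le_div_iff_mul_le hΔpos, Finset.sum_mul]
              exact Finset.sum_le_sum fun v _ => Nat.div_mul_le_self _ _
            omega
        _ = (2 * m) / Δ + n := by rw [G.sum_degrees_eq_twice_card_edges, hm]
        _ ≤ n + n := by
            have : 2 * m / Δ ≤ n := Nat.div_le_of_le_mul (by linarith [hnΔ])
            omega
        _ = 2 * n := by ring
    · -- surjectivity
      intro v
      refine ⟨ε.symm ⟨v, ⟨0, hk_pos v⟩⟩, ?_⟩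
      simp [φ, Equiv.apply_symm_apply]
    · -- edge count
      have hinj : Set.InjOn ψ G.edgeSet := by
        intro e₁ h₁ e₂ h₂ he
        have := congrArg (Sym2.map φ) he
        rwa [hlift e₁ h₁, hlift e₂ h₂] at this
      rw [Set.ncard_image_of_injOn hinj, Set.ncard_eq_toFinset_card', ← hm]
      congr 1
    · -- degree bound
      intro w
      rcases h : ε w with ⟨v, i⟩
      set S : Set (Sym2 V) := {e ∈ G.edgeSet | w ∈ ψ e} with hS
      have hSsub : ∀ e ∈ S, e ∈ G.incidenceFinset v ∧ r v e / Δ = i.val := by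
        rintro e ⟨heE, heW⟩
        simp only [ψ, Sym2.mem_map] at heW
        obtain ⟨x, hx, hfx⟩ := heW
        have hfx2 : f e x = ε w := by
          rw [← hfx, Equiv.apply_symm_apply]
        rw [h] at hfx2
        have hx1 : x = v := congrArg Sigma.fst hfx2
        subst hx1
        have hmem : e ∈ G.incidenceFinset x := by
          rw [SimpleGraph.mem_incidenceFinset]
          exact ⟨heE, hx⟩
        refine ⟨hmem, ?_⟩
        injection hfx2 with h1 h2'
        simpa [g] using congrArg Fin.val h2'
      have hSfin : S.Finite := Set.toFinite S
      rw [Set.ncard_eq_toFinset_card _ hSfin]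
      have hmaps : ∀ e ∈ hSfin.toFinset, r v e ∈ Finset.Ico (i.val * Δ) (i.val * Δ + Δ) := by
        intro e he
        rw [Set.Finite.mem_toFinset] at he
        obtain ⟨hmem, hdiv⟩ := hSsub e he
        have h1 : r v e % Δ + r v e / Δ * Δ = r v e := Nat.mod_add_div' _ _
        rw [hdiv] at h1
        have h2 := Nat.mod_lt (r v e) hΔpos
        rw [Finset.mem_Ico]
        omega
      have hinjS : Set.InjOn (r v) hSfin.toFinset := by
        intro e₁ h₁ e₂ h₂ hre
        rw [Finset.mem_coe, Set.Finite.mem_toFinset] at h₁ h₂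
        exact hr_inj v e₁ (hSsub e₁ h₁).1 e₂ (hSsub e₂ h₂).1 hre
      calc hSfin.toFinset.card ≤ (Finset.Ico (i.val * Δ) (i.val * Δ + Δ)).card :=
            Finset.card_le_card_of_injOn (r v) hmaps hinjS
        _ = Δ := by simp
        _ = (2 * m + n - 1) / n := hΔdef
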